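/- Suppose f : [0,T] → ℝ is continuously differentiable with f(0) = 0, and the partitions satisfy ‖P_N‖ → 0 as N → ∞. Then N·σ̂_ML²(N) → ∫₀ᵀ f'(x)² dx as N → ∞. -/

import Mathlib

open Filter Asymptotics Finset

/-- `Δx_{N,n} = x_{N,n+1} - x_{N,n}`. -/
noncomputable def deltaX (pts : ℕ → ℕ → ℝ) (N n : ℕ) : ℝ := pts N (n + 1) - pts N n

/-- Mesh size `‖P_N‖ = max_{0 ≤ n ≤ N-1} Δx_{N,n}`. -/
noncomputable def meshSize (pts : ℕ → ℕ → ℝ) (N : ℕ) : ℝ :=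
  ⨆ n ∈ Finset.range N, deltaX pts N n

/-- The ML scale estimator `σ̂_ML²(N) = (1/N) Σ_{n=1}^{N} (f_n − f_{n−1})²/Δx_{N,n−1}`. -/
noncomputable def sigmaML (pts : ℕ → ℕ → ℝ) (f : ℝ → ℝ) (N : ℕ) : ℝ :=
  (1 / (N : ℝ)) *
    ∑ n ∈ Finset.range N, (f (pts N (n + 1)) - f (pts N n)) ^ 2 / deltaX pts N n

/-- If `f` is continuously differentiable on `[0,T]` with `f(0) = 0` and `‖P_N‖ → 0`, then
`N·σ̂_ML²(N) → ∫₀ᵀ f'(x)² dx` as `N → ∞`. -/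
theorem ml_limit_C1 (T : ℝ) (hT : 0 < T) (pts : ℕ → ℕ → ℝ)
    (hx0 : ∀ N, pts N 0 = 0) (hxT : ∀ N, pts N N = T)
    (hmono : ∀ N, ∀ n < N, pts N n < pts N (n + 1))
    (hmesh : Tendsto (fun N => meshSize pts N) atTop (nhds 0))
    (f : ℝ → ℝ) (hf : ContDiffOn ℝ 1 f (Set.Icc 0 T)) (hf0 : f 0 = 0) :
    Tendsto (fun N : ℕ => (N : ℝ) * sigmaML pts f N) atTop
      (nhds (∫ x in (0 : ℝ)..T, (derivWithin f (Set.Icc 0 T) x) ^ 2)) := by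

  set s : Set ℝ := Set.Icc 0 T with hs
  set g : ℝ → ℝ := fun x => (derivWithin f s x) ^ 2 with hgdef
  -- monotonicity of the partition points
  have hmonole : ∀ N n, n ≤ N → ∀ m, m ≤ n → pts N m ≤ pts N n := by
    intro N n
    induction n with
    | zero => intro _ m hm; rw [Nat.le_zero.mp hm]
    | succ k ih =>
      intro hkN m hm
      rcases eq_or_lt_of_le hm with h | h
      · rw [h]
      · exact (ih (le_trans (Nat.le_succ k) hkN) m (Nat.lt_succ_iff.mp h)).trans
          (le_of_lt (hmono N k (Nat.lt_of_succ_le hkN)))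
  have hmem : ∀ N n, n ≤ N → pts N n ∈ s := by
    intro N n hn
    constructor
    · have := hmonole N n hn 0 (Nat.zero_le n); rwa [hx0 N] at this
    · have := hmonole N N le_rfl n hn; rwa [hxT N] at this
  have hΔpos : ∀ N n, n < N → 0 < deltaX pts N n := fun N n hn => sub_pos.mpr (hmono N n hn)
  have hΔle : ∀ N n, n < N → deltaX pts N n ≤ meshSize pts N := by
    intro N n hn
    have hbdd : BddAbove (Set.range fun m => ⨆ _ : m ∈ Finset.range N, deltaX pts N m) := by
      refine ⟨∑ m ∈ Finset.range N, |deltaX pts N m|, ?_⟩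
      rintro x ⟨m, rfl⟩
      show (⨆ _ : m ∈ Finset.range N, deltaX pts N m) ≤ _
      by_cases hm : m ∈ Finset.range N
      · rw [ciSup_pos (p := m ∈ Finset.range N) (f := fun _ => deltaX pts N m) hm]
        calc deltaX pts N m ≤ |deltaX pts N m| := le_abs_self _
        _ ≤ _ := Finset.single_le_sum (f := fun k => |deltaX pts N k|) (fun i _ => abs_nonneg _) hm
      · haveI : IsEmpty (m ∈ Finset.range N) := ⟨hm⟩
        rw [Real.iSup_of_isEmpty]
        exact Finset.sum_nonneg fun i _ => abs_nonneg _
    have h1 : deltaX pts N n = ⨆ _ : n ∈ Finset.range N, deltaX pts N n :=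
      (ciSup_pos (p := n ∈ Finset.range N) (f := fun _ => deltaX pts N n)
        (Finset.mem_range.mpr hn)).symm
    rw [meshSize, h1]
    exact le_ciSup hbdd n
  have hdiffOn : DifferentiableOn ℝ f s := hf.differentiableOn one_ne_zero
  have hgc : ContinuousOn g s := by
    have := hf.continuousOn_derivWithin (uniqueDiffOn_Icc hT) le_rfl
    exact this.pow 2
  have hMVT : ∀ N n, n < N → ∃ c ∈ Set.Ioo (pts N n) (pts N (n + 1)),
      derivWithin f s c = (f (pts N (n + 1)) - f (pts N n)) / deltaX pts N n := by
    intro N n hn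
    have hsub : Set.Icc (pts N n) (pts N (n + 1)) ⊆ s :=
      Set.Icc_subset_Icc (hmem N n hn.le).1 (hmem N (n + 1) hn).2
    obtain ⟨c, hc, hceq⟩ := exists_hasDerivAt_eq_slope f (derivWithin f s)
      (hmono N n hn) (hf.continuousOn.mono hsub)
      (fun x hx => by
        have hx' : x ∈ Set.Ioo (0 : ℝ) T :=
          ⟨lt_of_le_of_lt (hmem N n hn.le).1 hx.1, lt_of_lt_of_le hx.2 (hmem N (n + 1) hn).2⟩
        exact ((hdiffOn x (Set.Ioo_subset_Icc_self hx')).hasDerivWithinAt).hasDerivAt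
          (Icc_mem_nhds hx'.1 hx'.2))
    exact ⟨c, hc, hceq⟩
  rw [Metric.tendsto_nhds]
  intro ε hε
  set ε' := ε / (2 * T) with hε'def
  have hε'pos : 0 < ε' := div_pos hε (by linarith)
  obtain ⟨δ, hδpos, hδ⟩ := Metric.uniformContinuousOn_iff.mp
    (isCompact_Icc.uniformContinuousOn_of_continuous hgc) ε' hε'pos
  have hev1 : ∀ᶠ N : ℕ in atTop, dist (meshSize pts N) 0 < δ :=
    (Metric.tendsto_nhds.mp hmesh) δ hδpos
  filter_upwards [hev1, eventually_ge_atTop 1] with N hmN hN1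
  have hNne : (N : ℝ) ≠ 0 := Nat.cast_ne_zero.mpr (by omega)
  have hmδ : meshSize pts N < δ := by
    have h0 : dist (meshSize pts N) 0 = |meshSize pts N| := by
      rw [Real.dist_eq, sub_zero]
    rw [h0] at hmN
    exact lt_of_le_of_lt (le_abs_self _) hmN
  have hint : ∀ n < N, IntervalIntegrable g MeasureTheory.volume (pts N n) (pts N (n + 1)) := by
    intro n hn
    apply ContinuousOn.intervalIntegrable
    apply hgc.mono
    rw [Set.uIcc_of_le (hmono N n hn).le]
    exact Set.Icc_subset_Icc (hmem N n hn.le).1 (hmem N (n + 1) hn).2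
  have hsplit : ∑ n ∈ Finset.range N, ∫ x in pts N n..pts N (n + 1), g x
      = ∫ x in (0 : ℝ)..T, g x := by
    rw [intervalIntegral.sum_integral_adjacent_intervals hint, hx0, hxT]
  have hσ : (N : ℝ) * sigmaML pts f N
      = ∑ n ∈ Finset.range N, (f (pts N (n + 1)) - f (pts N n)) ^ 2 / deltaX pts N n := by
    rw [sigmaML]; field_simp
  have hterm : ∀ n ∈ Finset.range N,
      |(f (pts N (n + 1)) - f (pts N n)) ^ 2 / deltaX pts N n
        - ∫ x in pts N n..pts N (n + 1), g x| ≤ ε' * deltaX pts N n := by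
    intro n hn'
    have hn := Finset.mem_range.mp hn'
    obtain ⟨c, hc, hceq⟩ := hMVT N n hn
    have hΔ := hΔpos N n hn
    have hΔne : deltaX pts N n ≠ 0 := ne_of_gt hΔ
    have hrw : (f (pts N (n + 1)) - f (pts N n)) ^ 2 / deltaX pts N n
        = g c * deltaX pts N n := by
      rw [hgdef]
      simp only
      rw [hceq, div_pow]
      field_simp
    rw [hrw]
    have hdiffint : g c * deltaX pts N n - ∫ x in pts N n..pts N (n + 1), g x
        = ∫ x in pts N n..pts N (n + 1), (g c - g x) := by
      rw [intervalIntegral.integral_sub intervalIntegrable_const (hint n hn),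
        intervalIntegral.integral_const, smul_eq_mul, deltaX]
      ring
    rw [hdiffint]
    have hb : ∀ x ∈ Set.uIoc (pts N n) (pts N (n + 1)), ‖g c - g x‖ ≤ ε' := by
      intro x hx
      rw [Set.uIoc_of_le (hmono N n hn).le] at hx
      have hxIcc : x ∈ Set.Icc (pts N n) (pts N (n + 1)) := Set.Ioc_subset_Icc_self hx
      have hcIcc : c ∈ Set.Icc (pts N n) (pts N (n + 1)) := Set.Ioo_subset_Icc_self hc
      have hsub : Set.Icc (pts N n) (pts N (n + 1)) ⊆ s :=
        Set.Icc_subset_Icc (hmem N n hn.le).1 (hmem N (n + 1) hn).2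
      have hdist : dist c x < δ := by
        have h1 : dist c x ≤ pts N (n + 1) - pts N n := Real.dist_le_of_mem_Icc hcIcc hxIcc
        calc dist c x ≤ deltaX pts N n := h1
        _ ≤ meshSize pts N := hΔle N n hn
        _ < δ := hmδ
      have := hδ c (hsub hcIcc) x (hsub hxIcc) hdist
      rw [Real.dist_eq] at this
      exact le_of_lt this
    calc ‖∫ x in pts N n..pts N (n + 1), (g c - g x)‖
        ≤ ε' * |pts N (n + 1) - pts N n| :=
          intervalIntegral.norm_integral_le_of_norm_le_const hb
    _ = ε' * deltaX pts N n := by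
          have h2 : (0 : ℝ) < pts N (n + 1) - pts N n := sub_pos.mpr (hmono N n hn)
          rw [deltaX, abs_of_pos h2]
  have hsumΔ : ∑ n ∈ Finset.range N, deltaX pts N n = T := by
    have := Finset.sum_range_sub (fun k => pts N k) N
    simp only [deltaX]
    rw [this, hx0, hxT, sub_zero]
  have hmain : dist ((N : ℝ) * sigmaML pts f N) (∫ x in (0 : ℝ)..T, g x) ≤ ε' * T := by
    rw [Real.dist_eq, hσ, ← hsplit, ← Finset.sum_sub_distrib]
    calc |∑ n ∈ Finset.range N, ((f (pts N (n + 1)) - f (pts N n)) ^ 2 / deltaX pts N n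
          - ∫ x in pts N n..pts N (n + 1), g x)|
        ≤ ∑ n ∈ Finset.range N, |(f (pts N (n + 1)) - f (pts N n)) ^ 2 / deltaX pts N n
          - ∫ x in pts N n..pts N (n + 1), g x| := Finset.abs_sum_le_sum_abs _ _
    _ ≤ ∑ n ∈ Finset.range N, ε' * deltaX pts N n := Finset.sum_le_sum hterm
    _ = ε' * ∑ n ∈ Finset.range N, deltaX pts N n := by rw [Finset.mul_sum]
    _ = ε' * T := by rw [hsumΔ]
  have hεT : ε' * T = ε / 2 := by
    rw [hε'def]; field_simp
  calc dist ((N : ℝ) * sigmaML pts f N) (∫ x in (0 : ℝ)..T, g x) ≤ ε' * T := hmain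
  _ = ε / 2 := hεT
  _ < ε := by linarith
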